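/- arXiv:1309.7704 — 4 statements merged into one kernel-verified Lean document; each statement's English description precedes it below -/
import Mathlib

section
/- In the C*-algebra O_{H_{M,N}} generated by Sᵢ (i=1,…,M), Tₖ (k=1,…,N) and commuting projections e_{(i,k)} summing to 1, subject to ∑ᵢSᵢSᵢ* + ∑ₖTₖTₖ* = 1, Sᵢ*Sⱼ = δ_{ij}, Tₖ*Tₗ = δ_{kl}, e_{(i,k)}Sⱼ = δ_{ij}∑_{h=1}^M Sⱼ e_{(h,k)} and e_{(i,k)}Tₗ = δ_{kl}∑_{m=1}^N Tₗ e_{(i,m)}, the elements S_{(i,k)} := e_{(i,k)}Sᵢ and T_{(i,k)} := e_{(i,k)}Tₖ satisfy: e_{(i,k)} = S_{(i,k)}S_{(i,k)}* + T_{(i,k)}T_{(i,k)}*. -/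
/-- In the C*-algebra generated by `Sᵢ`, `Tₖ` and commuting projections `e_{(i,k)}`
summing to `1` subject to the listed relations, the elements `S_{(i,k)} = e_{(i,k)}Sᵢ` and
`T_{(i,k)} = e_{(i,k)}Tₖ` satisfy `e_{(i,k)} = S_{(i,k)}S_{(i,k)}* + T_{(i,k)}T_{(i,k)}*`. -/
theorem stmt10 (D : Type*) [CStarAlgebra D] (M N : ℕ) (hM : 1 < M) (hN : 1 < N)
    (S : Fin M → D) (T : Fin N → D) (e : Fin M → Fin N → D)
    (heproj : ∀ (i : Fin M) (k : Fin N), e i k * e i k = e i k ∧ star (e i k) = e i k)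
    (heorth : ∀ (i j : Fin M) (k l : Fin N), (i, k) ≠ (j, l) → e i k * e j l = 0)
    (hesum : ∑ i, ∑ k, e i k = 1)
    (hSisom : ∀ i j : Fin M, star (S i) * S j = if i = j then 1 else 0)
    (hTisom : ∀ k l : Fin N, star (T k) * T l = if k = l then 1 else 0)
    (hsum : (∑ i, S i * star (S i)) + (∑ k, T k * star (T k)) = 1)
    (heS : ∀ (i : Fin M) (k : Fin N) (j : Fin M),
      e i k * S j = if i = j then ∑ h, S j * e h k else 0)
    (heT : ∀ (i : Fin M) (k : Fin N) (l : Fin N),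
      e i k * T l = if k = l then ∑ m, T l * e i m else 0) :
    ∀ (i : Fin M) (k : Fin N),
      e i k = (e i k * S i) * star (e i k * S i) + (e i k * T k) * star (e i k * T k) := by
  intro i k
  have he1 := (heproj i k).1
  have he2 := (heproj i k).2
  have hS0 : ∀ j : Fin M, j ≠ i → e i k * S j = 0 := by
    intro j hj
    rw [heS i k j, if_neg (fun h => hj h.symm)]
  have hT0 : ∀ l : Fin N, l ≠ k → e i k * T l = 0 := by
    intro l hl
    rw [heT i k l, if_neg (fun h => hl h.symm)]
  have key : e i k * ((∑ j, S j * star (S j)) + (∑ l, T l * star (T l))) * e i k = e i k := by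
    rw [hsum, mul_one, he1]
  calc e i k = e i k * ((∑ j, S j * star (S j)) + (∑ l, T l * star (T l))) * e i k := key.symm
    _ = (∑ j, e i k * (S j * star (S j)) * e i k) + (∑ l, e i k * (T l * star (T l)) * e i k) := by
        rw [mul_add, add_mul, Finset.mul_sum, Finset.mul_sum, Finset.sum_mul, Finset.sum_mul]
    _ = e i k * (S i * star (S i)) * e i k + e i k * (T k * star (T k)) * e i k := by
        congr 1
        · rw [Finset.sum_eq_single i]
          · intro j _ hj
            rw [← mul_assoc, hS0 j hj, zero_mul, zero_mul]
          · intro h; exact absurd (Finset.mem_univ i) h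
        · rw [Finset.sum_eq_single k]
          · intro l _ hl
            rw [← mul_assoc, hT0 l hl, zero_mul, zero_mul]
          · intro h; exact absurd (Finset.mem_univ k) h
    _ = (e i k * S i) * star (e i k * S i) + (e i k * T k) * star (e i k * T k) := by
        rw [star_mul, star_mul, he2]
        simp [mul_assoc]
end

section
/- With the same relations as in the previous setting, the partial isometries S_{(i,k)} = e_{(i,k)}Sᵢ satisfy S_{(i,k)}*S_{(i,k)} = ∑_{j=1}^M (S_{(j,k)}S_{(j,k)}* + T_{(j,k)}T_{(j,k)}*), and T_{(i,k)}*T_{(i,k)} = ∑_{l=1}^N (S_{(i,l)}S_{(i,l)}* + T_{(i,l)}T_{(i,l)}*). -/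
/-- With the same relations, the partial isometries `S_{(i,k)} = e_{(i,k)}Sᵢ`,
`T_{(i,k)} = e_{(i,k)}Tₖ` satisfy
`S_{(i,k)}*S_{(i,k)} = ∑ⱼ (S_{(j,k)}S_{(j,k)}* + T_{(j,k)}T_{(j,k)}*)` and
`T_{(i,k)}*T_{(i,k)} = ∑ₗ (S_{(i,l)}S_{(i,l)}* + T_{(i,l)}T_{(i,l)}*)`. -/
theorem stmt11 (D : Type*) [CStarAlgebra D] (M N : ℕ) (hM : 1 < M) (hN : 1 < N)
    (S : Fin M → D) (T : Fin N → D) (e : Fin M → Fin N → D)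
    (heproj : ∀ (i : Fin M) (k : Fin N), e i k * e i k = e i k ∧ star (e i k) = e i k)
    (heorth : ∀ (i j : Fin M) (k l : Fin N), (i, k) ≠ (j, l) → e i k * e j l = 0)
    (hesum : ∑ i, ∑ k, e i k = 1)
    (hSisom : ∀ i j : Fin M, star (S i) * S j = if i = j then 1 else 0)
    (hTisom : ∀ k l : Fin N, star (T k) * T l = if k = l then 1 else 0)
    (hST : ∀ (j : Fin M) (l : Fin N), star (S j) * T l = 0)
    (hsum : (∑ i, S i * star (S i)) + (∑ k, T k * star (T k)) = 1)
    (heS : ∀ (i : Fin M) (k : Fin N) (j : Fin M),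
      e i k * S j = if i = j then ∑ h, S j * e h k else 0)
    (heT : ∀ (i : Fin M) (k : Fin N) (l : Fin N),
      e i k * T l = if k = l then ∑ m, T l * e i m else 0) :
    ∀ (i : Fin M) (k : Fin N),
      (star (e i k * S i) * (e i k * S i) =
        ∑ j, ((e j k * S j) * star (e j k * S j) + (e j k * T k) * star (e j k * T k))) ∧
      (star (e i k * T k) * (e i k * T k) =
        ∑ l, ((e i l * S i) * star (e i l * S i) + (e i l * T l) * star (e i l * T l))) := by
  have hstar : ∀ i k, star (e i k) = e i k := fun i k => (heproj i k).2
  have hidem : ∀ i k, e i k * e i k = e i k := fun i k => (heproj i k).1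
  have heS0 : ∀ (i : Fin M) (k : Fin N) (j : Fin M), i ≠ j → e i k * S j = 0 := by
    intro i k j h; rw [heS i k j, if_neg h]
  have heT0 : ∀ (i : Fin M) (k : Fin N) (l : Fin N), k ≠ l → e i k * T l = 0 := by
    intro i k l h; rw [heT i k l, if_neg h]
  have key : ∀ (j : Fin M) (k : Fin N),
      (e j k * S j) * star (e j k * S j) + (e j k * T k) * star (e j k * T k) = e j k := by
    intro j k
    have h1 : e j k * ((∑ i, S i * star (S i)) + ∑ l, T l * star (T l)) =
        e j k * (S j * star (S j)) + e j k * (T k * star (T k)) := by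
      rw [mul_add, Finset.mul_sum, Finset.mul_sum]
      congr 1
      · rw [Finset.sum_eq_single j]
        · intro b _ hb
          rw [← mul_assoc, heS0 j k b (Ne.symm hb), zero_mul]
        · intro h; exact absurd (Finset.mem_univ j) h
      · rw [Finset.sum_eq_single k]
        · intro b _ hb
          rw [← mul_assoc, heT0 j k b (Ne.symm hb), zero_mul]
        · intro h; exact absurd (Finset.mem_univ k) h
    rw [hsum, mul_one] at h1
    have h2 : (e j k * S j) * star (e j k * S j) + (e j k * T k) * star (e j k * T k)
        = (e j k * (S j * star (S j)) + e j k * (T k * star (T k))) * e j k := by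
      simp only [star_mul, hstar]
      noncomm_ring
    rw [h2, ← h1, hidem]
  intro i k
  constructor
  · have lhs : star (e i k * S i) * (e i k * S i) = ∑ h, e h k := by
      rw [star_mul, hstar, mul_assoc, ← mul_assoc (e i k), hidem, heS i k i, if_pos rfl,
        Finset.mul_sum]
      refine Finset.sum_congr rfl fun h _ => ?_
      rw [← mul_assoc, hSisom, if_pos rfl, one_mul]
    rw [lhs]
    exact (Finset.sum_congr rfl fun j _ => (key j k)).symm
  · have lhs : star (e i k * T k) * (e i k * T k) = ∑ m, e i m := by
      rw [star_mul, hstar, mul_assoc, ← mul_assoc (e i k), hidem, heT i k k, if_pos rfl,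
        Finset.mul_sum]
      refine Finset.sum_congr rfl fun m _ => ?_
      rw [← mul_assoc, hTisom, if_pos rfl, one_mul]
    rw [lhs]
    exact (Finset.sum_congr rfl fun l _ => (key i l)).symm
end

section
/- Let A_{2,N} = E₂ ⊗ I_N and B_{2,N} = I₂ ⊗ E_N be the 2N × 2N integer matrices, where E_n is the n×n all-ones matrix and I_n the identity. Then the cokernel ℤ^{2N}/(A_{2,N} + B_{2,N} − I_{2N})ℤ^{2N} is isomorphic to ℤ/(N²−1)ℤ, and the kernel of A_{2,N} + B_{2,N} − I_{2N} acting on ℤ^{2N} is trivial. -/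
open Matrix

/-- The all-ones `m × m` integer matrix `E_m`. -/
def allOnes (m : ℕ) : Matrix (Fin m) (Fin m) ℤ := Matrix.of fun _ _ => 1

/-- `A_{2,N} = E₂ ⊗ I_N`. -/
def A2N (N : ℕ) : Matrix (Fin 2 × Fin N) (Fin 2 × Fin N) ℤ :=
  Matrix.kroneckerMap (· * ·) (allOnes 2) (1 : Matrix (Fin N) (Fin N) ℤ)

/-- `B_{2,N} = I₂ ⊗ E_N`. -/
def B2N (N : ℕ) : Matrix (Fin 2 × Fin N) (Fin 2 × Fin N) ℤ :=
  Matrix.kroneckerMap (· * ·) (1 : Matrix (Fin 2) (Fin 2) ℤ) (allOnes N)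

lemma key (N : ℕ) (u : Fin 2 × Fin N → ℤ) (i : Fin 2) (j : Fin N) :
    (A2N N + B2N N - 1).mulVec u (i, j) = u (1 - i, j) + ∑ j', u (i, j') := by
  simp only [Matrix.mulVec, dotProduct, A2N, B2N, allOnes, Matrix.kroneckerMap,
    Matrix.sub_apply, Matrix.add_apply, Matrix.one_apply, Matrix.of_apply,
    Fintype.sum_prod_type, Fin.sum_univ_two]
  set_option linter.unnecessarySeqFocus false in
  fin_cases i <;>
    simp [Finset.sum_ite_eq, Finset.sum_ite_eq', sub_mul, add_mul, Prod.ext_iff,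
      Finset.sum_sub_distrib, Finset.sum_add_distrib] <;> ring

/-- the cokernel map -/
def psi (N : ℕ) : (Fin 2 × Fin N → ℤ) →ₗ[ℤ] ZMod (N ^ 2 - 1) where
  toFun v := (((∑ j, v (0, j)) - N * ∑ j, v (1, j) : ℤ) : ZMod (N ^ 2 - 1))
  map_add' u v := by
    have : ((∑ j, (u + v) (0, j)) - N * ∑ j, (u + v) (1, j) : ℤ)
        = ((∑ j, u (0, j)) - N * ∑ j, u (1, j))
          + ((∑ j, v (0, j)) - N * ∑ j, v (1, j)) := by
      simp only [Pi.add_apply, Finset.sum_add_distrib]; ring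
    show ((_ : ℤ) : ZMod (N ^ 2 - 1)) = _
    rw [this, Int.cast_add]
  map_smul' c v := by
    have : ((∑ j, (c • v) (0, j)) - N * ∑ j, (c • v) (1, j) : ℤ)
        = c * ((∑ j, v (0, j)) - N * ∑ j, v (1, j)) := by
      simp only [Pi.smul_apply, smul_eq_mul, ← Finset.mul_sum]; ring
    show ((_ : ℤ) : ZMod (N ^ 2 - 1)) = _
    rw [this, Int.cast_mul]
    simp [zsmul_eq_mul]

/-- `ℤ^{2N}/(A_{2,N} + B_{2,N} − I)ℤ^{2N} ≅ ℤ/(N²−1)ℤ` and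
`Ker(A_{2,N} + B_{2,N} − I) = 0` in `ℤ^{2N}`. -/
theorem stmt12 (N : ℕ) (hN : 2 ≤ N) :
    Nonempty (((Fin 2 × Fin N → ℤ) ⧸
        LinearMap.range (Matrix.mulVecLin (A2N N + B2N N - 1))) ≃+ ZMod (N ^ 2 - 1)) ∧
    LinearMap.ker (Matrix.mulVecLin (A2N N + B2N N - 1)) = ⊥ := by
  have hNpos : 0 < N := by omega
  have hm : ((N ^ 2 - 1 : ℕ) : ℤ) = (N : ℤ) ^ 2 - 1 := by
    have : 1 ≤ N ^ 2 := Nat.one_le_pow _ _ hNpos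
    push_cast [this]; ring
  constructor
  · -- cokernel
    have hker : LinearMap.range (Matrix.mulVecLin (A2N N + B2N N - 1)) =
        LinearMap.ker (psi N) := by
      apply le_antisymm
      · rintro _ ⟨u, rfl⟩
        simp only [LinearMap.mem_ker, Matrix.mulVecLin_apply, psi, LinearMap.coe_mk,
          AddHom.coe_mk]
        have h0 : ∀ j, (A2N N + B2N N - 1).mulVec u (0, j) = u (1, j) + ∑ j', u (0, j') := by
          intro j; simpa using key N u 0 j
        have h1 : ∀ j, (A2N N + B2N N - 1).mulVec u (1, j) = u (0, j) + ∑ j', u (1, j') := by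
          intro j; simpa using key N u 1 j
        simp only [h0, h1, Finset.sum_add_distrib, Finset.sum_const, Finset.card_univ,
          Fintype.card_fin, nsmul_eq_mul]
        have : ((∑ j', u (1, j')) + N * ∑ j', u (0, j') -
            N * ((∑ j', u (0, j')) + N * ∑ j', u (1, j'))
            : ℤ) = -((N^2 - 1 : ℕ) : ℤ) * ∑ j', u (1, j') := by rw [hm]; ring
        rw [this]
        push_cast
        simp [ZMod.natCast_self]
      · intro v hv
        simp only [LinearMap.mem_ker, psi, LinearMap.coe_mk, AddHom.coe_mk] at hv
        rw [ZMod.intCast_zmod_eq_zero_iff_dvd] at hv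
        obtain ⟨k, hk⟩ := hv
        rw [hm] at hk
        set Sx := ∑ j, v (0, j) with hSx
        set Sy := ∑ j, v (1, j) with hSy
        set p : Fin 2 × Fin N → ℤ := fun q =>
          if q.1 = 0 then v (1, q.2) - Sx + N * Sy + N^2 * k
          else v (0, q.2) - Sy - N * k with hp
        have k0 : ∀ j, (A2N N + B2N N - 1).mulVec p (0, j) = p (1, j) + ∑ j', p (0, j') :=
          fun j => by simpa using key N p 0 j
        have k1 : ∀ j, (A2N N + B2N N - 1).mulVec p (1, j) = p (0, j) + ∑ j', p (1, j') :=
          fun j => by simpa using key N p 1 j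
        refine ⟨p, ?_⟩
        funext q
        obtain ⟨i, j⟩ := q
        fin_cases i
        · show (A2N N + B2N N - 1).mulVecLin p (0, j) = v (0, j)
          rw [Matrix.mulVecLin_apply, k0 j]
          simp only [hp, if_pos rfl, one_ne_zero, if_false, Finset.sum_add_distrib,
            Finset.sum_sub_distrib, Finset.sum_const, Finset.card_univ, Fintype.card_fin,
            nsmul_eq_mul, ← hSx, ← hSy]
          linear_combination (-(N : ℤ)) * hk
        · show (A2N N + B2N N - 1).mulVecLin p (1, j) = v (1, j)
          rw [Matrix.mulVecLin_apply, k1 j]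
          simp only [hp, if_pos rfl, one_ne_zero, if_false, Finset.sum_add_distrib,
            Finset.sum_sub_distrib, Finset.sum_const, Finset.card_univ, Fintype.card_fin,
            nsmul_eq_mul, ← hSx, ← hSy]
          ring
    have hsurj : Function.Surjective (psi N) := by
      intro z
      obtain ⟨a, rfl⟩ := ZMod.intCast_surjective z
      refine ⟨fun q => if q = (0, ⟨0, hNpos⟩) then a else 0, ?_⟩
      simp only [psi, LinearMap.coe_mk, AddHom.coe_mk, Prod.mk.injEq]
      rw [Finset.sum_eq_single (⟨0, hNpos⟩ : Fin N)]
      · simp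
      · intro b _ hb; simp [hb]
      · simp
    exact ⟨((Submodule.quotEquivOfEq _ _ hker).trans
      ((psi N).quotKerEquivOfSurjective hsurj)).toAddEquiv⟩
  · -- kernel
    rw [LinearMap.ker_eq_bot']
    intro v hv
    have h0 : ∀ j, v (1, j) + ∑ j', v (0, j') = 0 := by
      intro j
      have := congrFun hv (0, j)
      rw [Matrix.mulVecLin_apply, key] at this
      simpa using this
    have h1 : ∀ j, v (0, j) + ∑ j', v (1, j') = 0 := by
      intro j
      have := congrFun hv (1, j)
      rw [Matrix.mulVecLin_apply, key] at this
      simpa using this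
    set S0 := ∑ j, v (0, j) with hS0
    set S1 := ∑ j, v (1, j) with hS1
    have e1 : S1 + N * S0 = 0 := by
      have := Finset.sum_congr rfl (fun j (_ : j ∈ Finset.univ) => h0 j)
      simpa [Finset.sum_add_distrib, Finset.card_univ, mul_comm] using this
    have e2 : S0 + N * S1 = 0 := by
      have := Finset.sum_congr rfl (fun j (_ : j ∈ Finset.univ) => h1 j)
      simpa [Finset.sum_add_distrib, Finset.card_univ, mul_comm] using this
    have hNZ : (2:ℤ) ≤ (N:ℤ) := by exact_mod_cast hN
    have hS0z : S0 = 0 := by nlinarith [sq_nonneg S0, sq_nonneg S1, sq_nonneg (S0 - S1), sq_nonneg (S0 + S1)]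
    have hS1z : S1 = 0 := by nlinarith
    funext q
    obtain ⟨i, j⟩ := q
    fin_cases i
    · show v (0, j) = (0 : Fin 2 × Fin N → ℤ) (0, j)
      have := h1 j; rw [hS1z] at this; simpa using this
    · show v (1, j) = (0 : Fin 2 × Fin N → ℤ) (1, j)
      have := h0 j; rw [hS0z] at this; simpa using this
end

section
/- Let H be a Hilbert C*-quad module of strongly finite type with finite bases {u₁,…,u_M} (right B₁-module) and {e₁,…,e_{M'}} of B₁ as right A-module through ψ₁∘λ₁ (so z = ∑ⱼ eⱼψ₁(λ₁(eⱼ*z)) for z ∈ B₁). Then the family {uᵢφ₁(eⱼ) : 1 ≤ i ≤ M, 1 ≤ j ≤ M'} is a finite basis of H as a right A-module: ξ = ∑_{i,j} uᵢφ₁(eⱼ)·⟨uᵢφ₁(eⱼ)|ξ⟩_A for all ξ ∈ H. -/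
/-- If `H` is of strongly finite type, with finite basis `u₁,…,u_M` of `H` as a right Hilbert
`B₁`-module and finite basis `e₁,…,e_{M'}` of `B₁` as a right `A`-module through `ψ₁∘λ₁`, then
`{uᵢφ₁(eⱼ)}` is a finite basis of `H` as a right `A`-module:
`ξ = ∑_{i,j} uᵢφ₁(eⱼ)·⟨uᵢφ₁(eⱼ)|ξ⟩_A` for all `ξ ∈ H`. -/
theorem stmt19 (A B₁ H : Type*) [CStarAlgebra A] [CStarAlgebra B₁] [AddCommGroup H]
    (M M' : ℕ)
    (actA : H → A → H) (act1 : H → B₁ → H)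
    (innerA : H → H → A) (inner1 : H → H → B₁)
    (psi1 : A → B₁) (lam1 : B₁ → A)
    (u : Fin M → H) (e : Fin M' → B₁)
    -- `u₁,…,u_M` is a finite basis of `H` as a right Hilbert `B₁`-module
    (hbasisu : ∀ ξ : H, ∑ i, act1 (u i) (inner1 (u i) ξ) = ξ)
    -- `e₁,…,e_{M'}` is a finite basis of `B₁` as a right `A`-module through `ψ₁∘λ₁`
    (hbasise : ∀ z : B₁, ∑ j, e j * psi1 (lam1 (star (e j) * z)) = z)
    -- compatibility of `λ₁` and `ψ₁`, and with the inner products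
    (hlam : ∀ (b : B₁) (a : A), lam1 (b * psi1 a) = lam1 b * a)
    (hlamA : ∀ ξ η : H, lam1 (inner1 ξ η) = innerA ξ η)
    -- the right-module structures
    (hact : ∀ (ξ : H) (z : B₁) (a : A), act1 ξ (z * psi1 a) = actA (act1 ξ z) a)
    (hact_add : ∀ (ξ : H) (x y : B₁), act1 ξ (x + y) = act1 ξ x + act1 ξ y)
    (hinnerl : ∀ (ξ η : H) (z : B₁), inner1 (act1 ξ z) η = star z * inner1 ξ η) :
    ∀ ξ : H, ∑ i, ∑ j, actA (act1 (u i) (e j)) (innerA (act1 (u i) (e j)) ξ) = ξ := by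
  intro ξ
  have key : ∀ i : Fin M, ∑ j, actA (act1 (u i) (e j)) (innerA (act1 (u i) (e j)) ξ)
      = act1 (u i) (inner1 (u i) ξ) := by
    intro i
    have h1 : ∀ j : Fin M', actA (act1 (u i) (e j)) (innerA (act1 (u i) (e j)) ξ)
        = act1 (u i) (e j * psi1 (lam1 (star (e j) * inner1 (u i) ξ))) := by
      intro j
      rw [← hlamA, hinnerl, ← hact]
    calc ∑ j, actA (act1 (u i) (e j)) (innerA (act1 (u i) (e j)) ξ)
        = ∑ j, act1 (u i) (e j * psi1 (lam1 (star (e j) * inner1 (u i) ξ))) := by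
          exact Finset.sum_congr rfl fun j _ => h1 j
      _ = act1 (u i) (∑ j, e j * psi1 (lam1 (star (e j) * inner1 (u i) ξ))) := by
          induction (Finset.univ : Finset (Fin M')) using Finset.induction with
          | empty =>
            simp only [Finset.sum_empty]
            have h0 := hact_add (u i) 0 0
            rw [add_zero] at h0
            exact (add_left_cancel (a := act1 (u i) 0)
              (by rw [add_zero]; exact h0.symm)).symm
          | insert _ _ h ih => simp [Finset.sum_insert h, hact_add, ih]
      _ = act1 (u i) (inner1 (u i) ξ) := by rw [hbasise]
  calc ∑ i, ∑ j, actA (act1 (u i) (e j)) (innerA (act1 (u i) (e j)) ξ)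
      = ∑ i, act1 (u i) (inner1 (u i) ξ) := Finset.sum_congr rfl fun i _ => key i
    _ = ξ := hbasisu ξ
end
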